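/- Consider n subsystems with states in a finite set X evolving as X^i_{t+1} = f(Z_t, X^i_t, γ_t(X^i_t), W^i_t), where Z_t is the empirical distribution of (X^1_t,...,X^n_t), the noises W^i_t are i.i.d. across i and t with common distribution ν, and γ_t : X → U is a prescription that is a function of Z_{1:t}. Then the conditional distribution of Z_{t+1} given (Z_{1:t}, γ_{1:t}) equals the conditional distribution of Z_{t+1} given (Z_t, γ_t); i.e., the mean-field process {Z_t} is a controlled Markov process with control γ_t. -/

import Mathlib

open scoped ENNReal

noncomputable section

/-- Empirical distribution (mean field) of a tuple of `n` points in a finite set `X`. -/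
def emp {X : Type*} [Fintype X] [DecidableEq X] {n : ℕ} (x : Fin n → X) : X → ℝ :=
  fun a => ((Finset.univ.filter fun i => x i = a).card : ℝ) / n

variable {X U W : Type*}

/-- Closed-loop state process of the mean-field system on the canonical sample space
`Ω = (Fin n → X) × (Fin T → Fin n → W)` (initial states and noises):
`X^i_{t+1} = f(Z_t, X^i_t, γ_t(X^i_t), W^i_t)` where the prescription
`γ_t = ψ_t(Z_{0:t})` is a function of the mean-field history. -/
def mfState [Fintype X] [DecidableEq X] [Inhabited W] {n T : ℕ}
    (f : (X → ℝ) → X → U → W → X)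
    (ψ : (t : ℕ) → (Fin (t + 1) → (X → ℝ)) → X → U)
    (ω : (Fin n → X) × (Fin T → Fin n → W)) : ℕ → Fin n → X
  | 0 => ω.1
  | t + 1 => fun i =>
      f (emp (mfState f ψ ω t)) (mfState f ψ ω t i)
        ((ψ t fun s : Fin (t + 1) => emp (mfState f ψ ω s)) (mfState f ψ ω t i))
        (if h : t < T then ω.2 ⟨t, h⟩ i else default)
  termination_by t => t
  decreasing_by all_goals first | exact s.isLt | omega

lemma emp_comp_perm {X : Type*} [Fintype X] [DecidableEq X] {n : ℕ} (x : Fin n → X)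
    (σ : Equiv.Perm (Fin n)) : emp (fun i => x (σ i)) = emp x := by
  funext a
  unfold emp
  congr 2
  exact Finset.card_equiv σ (fun i => by simp)

lemma exists_perm_emp_eq {X : Type*} [Fintype X] [DecidableEq X] {n : ℕ} (hn : 1 ≤ n)
    {x x' : Fin n → X} (h : emp x = emp x') :
    ∃ σ : Equiv.Perm (Fin n), x = fun i => x' (σ i) := by
  have hn0 : (n : ℝ) ≠ 0 := Nat.cast_ne_zero.mpr (by omega)
  have key : ∀ a, Fintype.card {i // x i = a} = Fintype.card {i // x' i = a} := by
    intro a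
    have h1 := congrFun h a
    unfold emp at h1
    field_simp at h1
    simpa [Fintype.card_subtype] using h1
  have e : ∀ a, {i // x i = a} ≃ {i // x' i = a} := fun a => Fintype.equivOfCardEq (key a)
  refine ⟨Equiv.ofFiberEquiv e, ?_⟩
  funext i
  exact (Equiv.ofFiberEquiv_map e i).symm

lemma sum_kernel_perm {X W : Type*} [Fintype X] [DecidableEq X] [Fintype W] {n : ℕ}
    (ν : W → ℝ≥0∞) (g : X → W → X) (znext : X → ℝ) (x' : Fin n → X) (σ : Equiv.Perm (Fin n)) :
    (∑ v : Fin n → W, if emp (fun i => g (x' (σ i)) (v i)) = znext then ∏ i, ν (v i) else 0)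
      = ∑ v : Fin n → W, if emp (fun i => g (x' i) (v i)) = znext then ∏ i, ν (v i) else 0 := by
  apply Fintype.sum_equiv (Equiv.arrowCongr σ (Equiv.refl W))
  intro v
  have h2 : emp (fun i => g (x' i) ((Equiv.arrowCongr σ (Equiv.refl W)) v i))
      = emp (fun j => g (x' (σ j)) (v j)) := by
    have h1 : (fun i => g (x' i) ((Equiv.arrowCongr σ (Equiv.refl W)) v i))
        = fun i => (fun j => g (x' (σ j)) (v j)) (σ.symm i) := by
      funext i
      simp [Equiv.arrowCongr]
    rw [h1]; exact emp_comp_perm (fun j => g (x' (σ j)) (v j)) σ.symm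
  have h3 : (∏ i, ν ((Equiv.arrowCongr σ (Equiv.refl W)) v i)) = ∏ i, ν (v i) := by
    simp only [Equiv.arrowCongr_apply, Equiv.refl_apply, Function.comp]
    exact Equiv.prod_comp σ.symm (fun j => ν (v j))
  simp only [h2, h3]

lemma sum_kernel_emp_invariant {X W : Type*} [Fintype X] [DecidableEq X] [Fintype W] {n : ℕ}
    (hn : 1 ≤ n) (ν : W → ℝ≥0∞) (g : X → W → X) (znext : X → ℝ) {x x' : Fin n → X}
    (h : emp x = emp x') :
    (∑ v : Fin n → W, if emp (fun i => g (x i) (v i)) = znext then ∏ i, ν (v i) else 0)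
      = ∑ v : Fin n → W, if emp (fun i => g (x' i) (v i)) = znext then ∏ i, ν (v i) else 0 := by
  obtain ⟨σ, hσ⟩ := exists_perm_emp_eq hn h
  subst hσ
  exact sum_kernel_perm ν g znext x' σ

lemma mfState_zero [Fintype X] [DecidableEq X] [Inhabited W] {n T : ℕ}
    (f : (X → ℝ) → X → U → W → X) (ψ : (t : ℕ) → (Fin (t + 1) → (X → ℝ)) → X → U)
    (ω : (Fin n → X) × (Fin T → Fin n → W)) : mfState f ψ ω 0 = ω.1 := by
  rw [mfState]

lemma mfState_succ [Fintype X] [DecidableEq X] [Inhabited W] {n T : ℕ}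
    (f : (X → ℝ) → X → U → W → X) (ψ : (t : ℕ) → (Fin (t + 1) → (X → ℝ)) → X → U)
    (ω : (Fin n → X) × (Fin T → Fin n → W)) (t : ℕ) :
    mfState f ψ ω (t + 1) = fun i =>
      f (emp (mfState f ψ ω t)) (mfState f ψ ω t i)
        ((ψ t fun s : Fin (t + 1) => emp (mfState f ψ ω (s : ℕ))) (mfState f ψ ω t i))
        (if h : t < T then ω.2 ⟨t, h⟩ i else default) := by
  rw [mfState]

lemma mfState_congr [Fintype X] [DecidableEq X] [Inhabited W] {n T : ℕ}
    (f : (X → ℝ) → X → U → W → X) (ψ : (t : ℕ) → (Fin (t + 1) → (X → ℝ)) → X → U)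
    (ω ω' : (Fin n → X) × (Fin T → Fin n → W)) (h1 : ω.1 = ω'.1) :
    ∀ s : ℕ, (∀ r : Fin T, (r : ℕ) < s → ω.2 r = ω'.2 r) →
      mfState f ψ ω s = mfState f ψ ω' s := by
  intro s
  induction s using Nat.strong_induction_on with
  | _ s ih =>
    match s with
    | 0 => intro _; rw [mfState_zero, mfState_zero, h1]
    | m + 1 =>
      intro h2
      have hm : ∀ k, k ≤ m → mfState f ψ ω k = mfState f ψ ω' k := fun k hk =>
        ih k (by omega) (fun r hr => h2 r (by omega))
      rw [mfState_succ, mfState_succ]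
      funext i
      have e1 : mfState f ψ ω m = mfState f ψ ω' m := hm m le_rfl
      have e2 : (fun r : Fin (m + 1) => emp (mfState f ψ ω (r : ℕ)))
          = fun r : Fin (m + 1) => emp (mfState f ψ ω' (r : ℕ)) := by
        funext r
        rw [hm (r : ℕ) (Nat.le_of_lt_succ r.isLt)]
      have e3 : (if h : m < T then ω.2 ⟨m, h⟩ i else default)
          = (if h : m < T then ω'.2 ⟨m, h⟩ i else default) := by
        by_cases h : m < T
        · simp only [dif_pos h]
          rw [h2 ⟨m, h⟩ (by simp)]
        · simp [h]
      rw [e1, e2, e3]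


def noiseSplit {W : Type*} {n T : ℕ} (τ : Fin T) :
    ((Fin n → W) × ({r : Fin T // r ≠ τ} → Fin n → W)) ≃ (Fin T → Fin n → W) where
  toFun q r := if h : r = τ then q.1 else q.2 ⟨r, h⟩
  invFun w := (w τ, fun r => w r.1)
  left_inv q := by
    obtain ⟨v, wo⟩ := q
    refine Prod.ext ?_ ?_
    · simp
    · funext r
      exact dif_neg r.2
  right_inv w := by
    funext r
    by_cases h : r = τ
    · subst h; simp
    · simp [h]

lemma noiseSplit_same {W : Type*} {n T : ℕ} (τ : Fin T) (v : Fin n → W)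
    (wo : {r : Fin T // r ≠ τ} → Fin n → W) : noiseSplit τ (v, wo) τ = v := dif_pos rfl

lemma noiseSplit_ne {W : Type*} {n T : ℕ} (τ : Fin T) (v : Fin n → W)
    (wo : {r : Fin T // r ≠ τ} → Fin n → W) (r : Fin T) (h : r ≠ τ) :
    noiseSplit τ (v, wo) r = wo ⟨r, h⟩ := dif_neg h

lemma mf_factorization [Fintype X] [DecidableEq X] [Fintype W] [DecidableEq W] [Inhabited W]
    {n T : ℕ} (hn : 1 ≤ n)
    (f : (X → ℝ) → X → U → W → X)
    (ψ : (t : ℕ) → (Fin (t + 1) → (X → ℝ)) → X → U)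
    (ρ : X → ℝ≥0∞) (ν : W → ℝ≥0∞) (hν : ∑ w : W, ν w = 1)
    (mass : ((Fin n → X) × (Fin T → Fin n → W)) → ℝ≥0∞)
    (hmass : ∀ ω, mass ω = (∏ i, ρ (ω.1 i)) * ∏ r, ∏ i, ν (ω.2 r i))
    (t : ℕ) (ht : t < T) (z : X → ℝ) (γ : X → U) (znext : X → ℝ)
    (S C : Finset ((Fin n → X) × (Fin T → Fin n → W)))
    (hC : ∀ ω, ω ∈ C ↔ emp (mfState f ψ ω (t + 1)) = znext)
    (hSz : ∀ ω ∈ S, emp (mfState f ψ ω t) = z)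
    (hSγ : ∀ ω ∈ S, (ψ t fun r : Fin (t + 1) => emp (mfState f ψ ω (r : ℕ))) = γ)
    (hSinv : ∀ ω ω' : ((Fin n → X) × (Fin T → Fin n → W)), ω.1 = ω'.1 →
      (∀ r : Fin T, (r : ℕ) < t → ω.2 r = ω'.2 r) → ω ∈ S → ω' ∈ S)
    (x₀ : Fin n → X) (hx₀ : emp x₀ = z) :
    ∑ ω ∈ S ∩ C, mass ω =
      (∑ v : Fin n → W, if emp (fun i => f z (x₀ i) (γ (x₀ i)) (v i)) = znext
        then ∏ i, ν (v i) else 0) * ∑ ω ∈ S, mass ω := by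
  set K : ℝ≥0∞ := ∑ v : Fin n → W, if emp (fun i => f z (x₀ i) (γ (x₀ i)) (v i)) = znext
      then ∏ i, ν (v i) else 0 with hK
  set τ : Fin T := ⟨t, ht⟩ with hτ
  set E : ((Fin n → X) × ((Fin n → W) × ({r : Fin T // r ≠ τ} → Fin n → W)))
      ≃ ((Fin n → X) × (Fin T → Fin n → W)) :=
    (Equiv.refl (Fin n → X)).prodCongr (noiseSplit τ) with hE
  have hE1 : ∀ x0 v wo, (E (x0, (v, wo))).1 = x0 := fun _ _ _ => rfl
  have hE2 : ∀ x0 v wo, (E (x0, (v, wo))).2 = noiseSplit τ (v, wo) := fun _ _ _ => rfl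
  have hne : ∀ r : Fin T, (r : ℕ) < t → r ≠ τ := by
    intro r hr hc
    rw [hc] at hr
    exact lt_irrefl t hr
  -- the key pointwise identity
  have key : ∀ (x0 : Fin n → X) (wo : {r : Fin T // r ≠ τ} → Fin n → W),
      (∑ v : Fin n → W, if E (x0, (v, wo)) ∈ S ∩ C then mass (E (x0, (v, wo))) else 0)
        = K * ∑ v : Fin n → W, if E (x0, (v, wo)) ∈ S then mass (E (x0, (v, wo))) else 0 := by
    intro x0 wo
    set M : ℝ≥0∞ := (∏ i, ρ (x0 i)) * ∏ r : {r : Fin T // r ≠ τ}, ∏ i, ν (wo r i) with hM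
    set ω0 := E (x0, ((fun _ => default), wo)) with hω0def
    have hnoise : ∀ (v v' : Fin n → W) (r : Fin T), (r : ℕ) < t →
        (E (x0, (v, wo))).2 r = (E (x0, (v', wo))).2 r := by
      intro v v' r hr
      rw [hE2, hE2, noiseSplit_ne τ _ _ r (hne r hr), noiseSplit_ne τ _ _ r (hne r hr)]
    have hstate : ∀ (v : Fin n → W) (s : ℕ), s ≤ t →
        mfState f ψ (E (x0, (v, wo))) s = mfState f ψ ω0 s := by
      intro v s hs
      exact mfState_congr f ψ (E (x0, (v, wo))) ω0 rfl s
        (fun r hr => hnoise v (fun _ => default) r (lt_of_lt_of_le hr hs))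
    have hmem : ∀ v : Fin n → W, (E (x0, (v, wo)) ∈ S ↔ ω0 ∈ S) := by
      intro v
      constructor
      · intro h
        exact hSinv (E (x0, (v, wo))) ω0 rfl (fun r hr => hnoise v (fun _ => default) r hr) h
      · intro h
        exact hSinv ω0 (E (x0, (v, wo))) rfl (fun r hr => hnoise (fun _ => default) v r hr) h
    set xt := mfState f ψ ω0 t with hxt
    have hCmem : ∀ v : Fin n → W, (E (x0, (v, wo)) ∈ C ↔
        emp (fun i => f (emp xt) (xt i)
          ((ψ t fun r : Fin (t + 1) => emp (mfState f ψ ω0 (r : ℕ))) (xt i)) (v i)) = znext) := by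
      intro v
      rw [hC, mfState_succ]
      have e3 : ∀ i, (if h : t < T then (E (x0, (v, wo))).2 ⟨t, h⟩ i else default) = v i := by
        intro i
        rw [dif_pos ht, hE2]
        exact congrFun (noiseSplit_same τ v wo) i
      have efun : (fun i => f (emp (mfState f ψ (E (x0, (v, wo))) t))
            (mfState f ψ (E (x0, (v, wo))) t i)
            ((ψ t fun r : Fin (t + 1) => emp (mfState f ψ (E (x0, (v, wo))) (r : ℕ)))
              (mfState f ψ (E (x0, (v, wo))) t i))
            (if h : t < T then (E (x0, (v, wo))).2 ⟨t, h⟩ i else default))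
          = fun i => f (emp xt) (xt i)
            ((ψ t fun r : Fin (t + 1) => emp (mfState f ψ ω0 (r : ℕ))) (xt i)) (v i) := by
        have e1 : mfState f ψ (E (x0, (v, wo))) t = xt := hstate v t le_rfl
        have e2 : (fun r : Fin (t + 1) => emp (mfState f ψ (E (x0, (v, wo))) (r : ℕ)))
            = fun r : Fin (t + 1) => emp (mfState f ψ ω0 (r : ℕ)) := by
          funext r
          rw [hstate v (r : ℕ) (Nat.le_of_lt_succ r.isLt)]
        funext i
        rw [e1, e2, e3 i]
      rw [efun]
    have hmassfac : ∀ v : Fin n → W, mass (E (x0, (v, wo))) = M * ∏ i, ν (v i) := by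
      intro v
      rw [hmass, hE1, hE2]
      have hsplit : (∏ r : Fin T, ∏ i, ν (noiseSplit τ (v, wo) r i))
          = (∏ i, ν (v i)) * ∏ r : {r : Fin T // r ≠ τ}, ∏ i, ν (wo r i) := by
        rw [← Finset.mul_prod_erase Finset.univ _ (Finset.mem_univ τ)]
        congr 1
        · rw [noiseSplit_same]
        · rw [Finset.prod_subtype (Finset.univ.erase τ) (p := fun r => r ≠ τ) (by simp)
            (fun r => ∏ i, ν (noiseSplit τ (v, wo) r i))]
          refine Finset.prod_congr rfl fun r _ => ?_
          rw [noiseSplit_ne τ v wo r.1 r.2]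
      rw [hsplit, hM]
      ring
    have hν1 : (∑ v : Fin n → W, ∏ i, ν (v i)) = 1 := by
      rw [← Fintype.sum_pow ν n, hν, one_pow]
    by_cases hS0 : ω0 ∈ S
    · have hz : emp xt = z := hSz ω0 hS0
      have hγ : (ψ t fun r : Fin (t + 1) => emp (mfState f ψ ω0 (r : ℕ))) = γ := hSγ ω0 hS0
      have hterm : ∀ v : Fin n → W,
          (if E (x0, (v, wo)) ∈ S ∩ C then mass (E (x0, (v, wo))) else 0)
            = M * (if emp (fun i => f z (xt i) (γ (xt i)) (v i)) = znext
                then ∏ i, ν (v i) else 0) := by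
        intro v
        have hSv : E (x0, (v, wo)) ∈ S := (hmem v).mpr hS0
        have hCv := hCmem v
        rw [hz, hγ] at hCv
        by_cases hc : emp (fun i => f z (xt i) (γ (xt i)) (v i)) = znext
        · rw [if_pos (Finset.mem_inter.mpr ⟨hSv, hCv.mpr hc⟩), if_pos hc, hmassfac v]
        · rw [if_neg (fun hm => hc (hCv.mp (Finset.mem_inter.mp hm).2)), if_neg hc, mul_zero]
      have htermS : ∀ v : Fin n → W,
          (if E (x0, (v, wo)) ∈ S then mass (E (x0, (v, wo))) else 0) = M * ∏ i, ν (v i) := by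
        intro v
        rw [if_pos ((hmem v).mpr hS0), hmassfac v]
      have hker : (∑ v : Fin n → W, if emp (fun i => f z (xt i) (γ (xt i)) (v i)) = znext
          then ∏ i, ν (v i) else 0) = K := by
        rw [hK]
        exact sum_kernel_emp_invariant hn ν (fun x w => f z x (γ x) w) znext
          (hz.trans hx₀.symm)
      calc (∑ v : Fin n → W, if E (x0, (v, wo)) ∈ S ∩ C then mass (E (x0, (v, wo))) else 0)
          = ∑ v : Fin n → W, M * (if emp (fun i => f z (xt i) (γ (xt i)) (v i)) = znext
              then ∏ i, ν (v i) else 0) := Finset.sum_congr rfl fun v _ => hterm v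
        _ = M * ∑ v : Fin n → W, (if emp (fun i => f z (xt i) (γ (xt i)) (v i)) = znext
              then ∏ i, ν (v i) else 0) := (Finset.mul_sum _ _ _).symm
        _ = M * K := by rw [hker]
        _ = K * (M * 1) := by ring
        _ = K * (M * ∑ v : Fin n → W, ∏ i, ν (v i)) := by rw [hν1]
        _ = K * ∑ v : Fin n → W, M * ∏ i, ν (v i) := by rw [Finset.mul_sum]
        _ = K * ∑ v : Fin n → W, (if E (x0, (v, wo)) ∈ S then mass (E (x0, (v, wo))) else 0) :=
            by rw [Finset.sum_congr rfl fun v _ => htermS v]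
    · have h1 : ∀ v : Fin n → W,
          (if E (x0, (v, wo)) ∈ S ∩ C then mass (E (x0, (v, wo))) else 0) = 0 := by
        intro v
        rw [if_neg (fun h => hS0 ((hmem v).mp (Finset.mem_inter.mp h).1))]
      have h2 : ∀ v : Fin n → W,
          (if E (x0, (v, wo)) ∈ S then mass (E (x0, (v, wo))) else 0) = 0 := by
        intro v
        rw [if_neg (fun h => hS0 ((hmem v).mp h))]
      rw [Finset.sum_congr rfl fun v _ => h1 v, Finset.sum_congr rfl fun v _ => h2 v]
      simp
  -- reparametrize sums over the sample space
  have reindex : ∀ (s : Finset ((Fin n → X) × (Fin T → Fin n → W))),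
      ∑ ω ∈ s, mass ω = ∑ x0 : Fin n → X, ∑ wo : {r : Fin T // r ≠ τ} → Fin n → W,
        ∑ v : Fin n → W, (if E (x0, (v, wo)) ∈ s then mass (E (x0, (v, wo))) else 0) := by
    intro s
    conv_lhs => rw [← Finset.univ_inter s, ← Finset.sum_ite_mem]
    rw [← Equiv.sum_comp E (fun ω => if ω ∈ s then mass ω else 0), Fintype.sum_prod_type]
    refine Finset.sum_congr rfl fun x0 _ => ?_
    rw [Fintype.sum_prod_type]
    exact Finset.sum_comm
  rw [reindex (S ∩ C), reindex S, Finset.mul_sum]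
  refine Finset.sum_congr rfl fun x0 _ => ?_
  rw [Finset.mul_sum]
  exact Finset.sum_congr rfl fun wo _ => key x0 wo

lemma sum_mass_ne_top [Fintype X] [DecidableEq X] [Fintype W] [DecidableEq W] {n T : ℕ}
    (ρ : X → ℝ≥0∞) (ν : W → ℝ≥0∞) (hρ : ∑ x : X, ρ x = 1) (hν : ∑ w : W, ν w = 1)
    (mass : ((Fin n → X) × (Fin T → Fin n → W)) → ℝ≥0∞)
    (hmass : ∀ ω, mass ω = (∏ i, ρ (ω.1 i)) * ∏ r, ∏ i, ν (ω.2 r i))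
    (S : Finset ((Fin n → X) × (Fin T → Fin n → W))) : ∑ ω ∈ S, mass ω ≠ ⊤ := by
  have hρ1 : ∀ x, ρ x ≤ 1 := fun x => hρ ▸ Finset.single_le_sum
    (f := ρ) (fun i _ => zero_le) (Finset.mem_univ x)
  have hν1 : ∀ w, ν w ≤ 1 := fun w => hν ▸ Finset.single_le_sum
    (f := ν) (fun i _ => zero_le) (Finset.mem_univ w)
  have hle : ∀ ω, mass ω ≤ 1 := by
    intro ω
    rw [hmass]
    refine mul_le_one' (Finset.prod_le_one (fun i _ => zero_le) (fun i _ => hρ1 _))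
      (Finset.prod_le_one (fun r _ => zero_le) (fun r _ =>
        Finset.prod_le_one (fun i _ => zero_le) (fun i _ => hν1 _)))
  have hsum : ∑ ω ∈ S, mass ω ≤ (S.card : ℝ≥0∞) := by
    calc ∑ ω ∈ S, mass ω ≤ ∑ _ω ∈ S, (1 : ℝ≥0∞) := Finset.sum_le_sum (fun ω _ => hle ω)
      _ = (S.card : ℝ≥0∞) := by rw [Finset.sum_const, nsmul_eq_mul, mul_one]
  exact ne_top_of_le_ne_top (ENNReal.natCast_ne_top _) hsum


/-- The mean-field process `{Z_t}` is a controlled Markov process with control `γ_t`: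
the conditional distribution of `Z_{t+1}` given `(Z_{0:t}, γ_{0:t})` equals the
conditional distribution of `Z_{t+1}` given `(Z_t, γ_t)`. Here the probability of an
event is the sum of the product-form masses (initial states i.i.d. with law `ρ`, noises
i.i.d. across `i` and `t` with law `ν`), and conditional probabilities are ratios. -/
theorem mean_field_is_controlled_markov
    [Fintype X] [DecidableEq X] [Fintype U] [DecidableEq U]
    [Fintype W] [DecidableEq W] [Inhabited W] {n T : ℕ} (hn : 1 ≤ n)
    (f : (X → ℝ) → X → U → W → X)
    (ψ : (t : ℕ) → (Fin (t + 1) → (X → ℝ)) → X → U)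
    (ρ : X → ℝ≥0∞) (ν : W → ℝ≥0∞) (hρ : ∑ x : X, ρ x = 1) (hν : ∑ w : W, ν w = 1)
    (mass : ((Fin n → X) × (Fin T → Fin n → W)) → ℝ≥0∞)
    (hmass : ∀ ω, mass ω = (∏ i, ρ (ω.1 i)) * ∏ t, ∏ i, ν (ω.2 t i))
    (t : ℕ) (ht : t < T)
    (zs : Fin (t + 1) → (X → ℝ)) (γs : Fin (t + 1) → (X → U)) (znext : X → ℝ)
    (A B C : Finset ((Fin n → X) × (Fin T → Fin n → W)))
    (hA : ∀ ω, ω ∈ A ↔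
      (∀ s : Fin (t + 1), emp (mfState f ψ ω (s : ℕ)) = zs s) ∧
      (∀ s : Fin (t + 1),
        (ψ (s : ℕ) fun r : Fin ((s : ℕ) + 1) => emp (mfState f ψ ω (r : ℕ))) = γs s))
    (hB : ∀ ω, ω ∈ B ↔
      emp (mfState f ψ ω t) = zs (Fin.last t) ∧
      (ψ t fun r : Fin (t + 1) => emp (mfState f ψ ω (r : ℕ))) = γs (Fin.last t))
    (hC : ∀ ω, ω ∈ C ↔ emp (mfState f ψ ω (t + 1)) = znext)
    (hApos : ∑ ω ∈ A, mass ω ≠ 0) (hBpos : ∑ ω ∈ B, mass ω ≠ 0) :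
    (∑ ω ∈ A ∩ C, mass ω) / (∑ ω ∈ A, mass ω) =
      (∑ ω ∈ B ∩ C, mass ω) / (∑ ω ∈ B, mass ω) := by
  set z : X → ℝ := zs (Fin.last t) with hz
  set γ : X → U := γs (Fin.last t) with hγ
  -- conditions satisfied on A
  have hSzA : ∀ ω ∈ A, emp (mfState f ψ ω t) = z := by
    intro ω hω
    exact ((hA ω).mp hω).1 (Fin.last t)
  have hSγA : ∀ ω ∈ A, (ψ t fun r : Fin (t + 1) => emp (mfState f ψ ω (r : ℕ))) = γ := by
    intro ω hω
    exact ((hA ω).mp hω).2 (Fin.last t)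
  have hSinvA : ∀ ω ω' : ((Fin n → X) × (Fin T → Fin n → W)), ω.1 = ω'.1 →
      (∀ r : Fin T, (r : ℕ) < t → ω.2 r = ω'.2 r) → ω ∈ A → ω' ∈ A := by
    intro ω ω' h1 h2 hω
    obtain ⟨ha1, ha2⟩ := (hA ω).mp hω
    refine (hA ω').mpr ⟨fun s => ?_, fun s => ?_⟩
    · rw [← mfState_congr f ψ ω ω' h1 (s : ℕ)
        (fun r hr => h2 r (lt_of_lt_of_le hr (Nat.le_of_lt_succ s.isLt)))]
      exact ha1 s
    · have hfun : (fun r : Fin ((s : ℕ) + 1) => emp (mfState f ψ ω' (r : ℕ)))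
          = fun r : Fin ((s : ℕ) + 1) => emp (mfState f ψ ω (r : ℕ)) := by
        funext r
        rw [mfState_congr f ψ ω ω' h1 (r : ℕ) (fun r' hr' => h2 r'
          (lt_of_lt_of_le hr' (le_trans (Nat.le_of_lt_succ r.isLt)
            (Nat.le_of_lt_succ s.isLt))))]
      rw [hfun]
      exact ha2 s
  -- conditions satisfied on B
  have hSzB : ∀ ω ∈ B, emp (mfState f ψ ω t) = z := fun ω hω => ((hB ω).mp hω).1
  have hSγB : ∀ ω ∈ B, (ψ t fun r : Fin (t + 1) => emp (mfState f ψ ω (r : ℕ))) = γ :=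
    fun ω hω => ((hB ω).mp hω).2
  have hSinvB : ∀ ω ω' : ((Fin n → X) × (Fin T → Fin n → W)), ω.1 = ω'.1 →
      (∀ r : Fin T, (r : ℕ) < t → ω.2 r = ω'.2 r) → ω ∈ B → ω' ∈ B := by
    intro ω ω' h1 h2 hω
    obtain ⟨hb1, hb2⟩ := (hB ω).mp hω
    have hfun : (fun r : Fin (t + 1) => emp (mfState f ψ ω' (r : ℕ)))
        = fun r : Fin (t + 1) => emp (mfState f ψ ω (r : ℕ)) := by
      funext r
      rw [mfState_congr f ψ ω ω' h1 (r : ℕ)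
        (fun r' hr' => h2 r' (lt_of_lt_of_le hr' (Nat.le_of_lt_succ r.isLt)))]
    refine (hB ω').mpr ⟨?_, ?_⟩
    · rw [← mfState_congr f ψ ω ω' h1 t (fun r hr => h2 r hr)]
      exact hb1
    · rw [hfun]
      exact hb2
  -- a reference state tuple
  obtain ⟨ω₀, hω₀⟩ := Finset.nonempty_of_sum_ne_zero hApos
  set x₀ : Fin n → X := mfState f ψ ω₀ t with hx₀def
  have hx₀ : emp x₀ = z := hSzA ω₀ hω₀
  have eqA := mf_factorization hn f ψ ρ ν hν mass hmass t ht z γ znext A C hC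
    hSzA hSγA hSinvA x₀ hx₀
  have eqB := mf_factorization hn f ψ ρ ν hν mass hmass t ht z γ znext B C hC
    hSzB hSγB hSinvB x₀ hx₀
  rw [eqA, eqB, mul_div_assoc, mul_div_assoc,
    ENNReal.div_self hApos (sum_mass_ne_top ρ ν hρ hν mass hmass A),
    ENNReal.div_self hBpos (sum_mass_ne_top ρ ν hρ hν mass hmass B)]
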